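/- Let (X, 𝒜, μ, T) be a measure-preserving dynamical system on a probability space satisfying the uniform mixing property (U1): for any A ∈ 𝒜 there exist a sequence ε_n > 0 with ε_n → 0 and an n₀ ∈ ℕ (both possibly depending on A) such that for all n ≥ n₀ and every B ∈ 𝒜, μ(A ∩ T^{−n}(B)) ≤ μ(A)μ(B) + ε_n μ(B). Then every sequence {A_n}_{n∈ℕ} of measurable sets with limsup_{n→∞} μ(A_n) > 0 is a Borel–Cantelli sequence, i.e. μ(limsup_{n→∞} T^{−n}(A_n)) = 1. -/

import Mathlib

open MeasureTheory Filter

/-- **Dynamical Borel--Cantelli under uniform mixing (U1)** (Theorem 9): in a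
measure-preserving system satisfying property (U1), every sequence of measurable targets
`A_n` with `limsup μ(A_n) > 0` is a Borel--Cantelli sequence. -/
theorem borel_cantelli_of_uniform_mixing
    {X : Type*} [MeasurableSpace X] (μ : Measure X) [IsProbabilityMeasure μ]
    (T : X → X) (hT : MeasurePreserving T μ μ)
    (hU1 : ∀ A : Set X, MeasurableSet A →
      ∃ (ε : ℕ → ℝ) (n₀ : ℕ), (∀ n, 0 < ε n) ∧ Tendsto ε atTop (nhds 0) ∧
        ∀ n ≥ n₀, ∀ B : Set X, MeasurableSet B →
          μ (A ∩ T^[n] ⁻¹' B) ≤ μ A * μ B + ENNReal.ofReal (ε n) * μ B)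
    (A : ℕ → Set X) (hA : ∀ n, MeasurableSet (A n))
    (hpos : 0 < limsup (fun n => μ (A n)) atTop) :
    μ (limsup (fun n => T^[n] ⁻¹' A n) atTop) = 1 := by
  set s : ℕ → Set X := fun n => T^[n] ⁻¹' A n with hs
  have hsm : ∀ n, MeasurableSet (s n) := fun n =>
    ((hT.iterate n).measurable) (hA n)
  by_contra hne
  have hLm : MeasurableSet (limsup s atTop) := MeasurableSet.measurableSet_limsup hsm
  have hlt : μ (limsup s atTop) < 1 := lt_of_le_of_ne prob_le_one hne
  have hcpos : 0 < μ (limsup s atTop)ᶜ := by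
    rw [measure_compl hLm (measure_ne_top μ _), measure_univ]
    exact tsub_pos_of_lt hlt
  set C : ℕ → Set X := fun t => ⋂ n, ⋂ (_ : t ≤ n), (s n)ᶜ with hCdef
  have hCm : ∀ t, MeasurableSet (C t) := fun t =>
    MeasurableSet.iInter fun n => MeasurableSet.iInter fun _ => (hsm n).compl
  have hsub : (limsup s atTop)ᶜ ⊆ ⋃ t, C t := by
    intro x hx
    simp only [Set.mem_compl_iff, Filter.mem_limsup_iff_frequently_mem,
      Filter.not_frequently] at hx
    rw [Filter.eventually_atTop] at hx
    obtain ⟨t, ht⟩ := hx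
    exact Set.mem_iUnion.mpr ⟨t, Set.mem_iInter.mpr fun n =>
      Set.mem_iInter.mpr fun hn => ht n hn⟩
  obtain ⟨t, htpos⟩ : ∃ t, μ (C t) ≠ 0 := by
    by_contra hall
    push_neg at hall
    have h0 : μ ((limsup s atTop)ᶜ) = 0 :=
      le_antisymm ((measure_mono hsub).trans (measure_iUnion_null hall).le) zero_le
    exact hcpos.ne' h0
  have htpos' : 0 < μ (C t) := pos_iff_ne_zero.mpr htpos
  obtain ⟨ε, n₀, hεpos, hεtend, hmix⟩ := hU1 (C t)ᶜ (hCm t).compl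
  -- eventually ε n < toReal (μ (C t))
  have hev : ∀ᶠ n in atTop, ε n < (μ (C t)).toReal := by
    have : (0 : ℝ) < (μ (C t)).toReal :=
      ENNReal.toReal_pos htpos (measure_ne_top μ _)
    exact hεtend.eventually (eventually_lt_nhds this)
  have hzero : ∀ᶠ n in atTop, μ (A n) = 0 := by
    filter_upwards [hev, eventually_ge_atTop n₀, eventually_ge_atTop t]
      with n hεn hn₀ hnt
    by_contra hAn
    have hAnt : μ (A n) ≠ ⊤ := measure_ne_top μ _
    have hsn : μ (s n) = μ (A n) := (hT.iterate n).measure_preimage (hA n).nullMeasurableSet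
    have hsnsub : s n ⊆ (C t)ᶜ := by
      intro x hxs hxC
      exact (Set.mem_iInter.mp (Set.mem_iInter.mp hxC n) hnt) hxs
    have hinter : (C t)ᶜ ∩ s n = s n := Set.inter_eq_right.mpr hsnsub
    have hkey := hmix n hn₀ (A n) (hA n)
    rw [show (T^[n] ⁻¹' A n) = s n from rfl, hinter, hsn] at hkey
    have hclt : μ (C t)ᶜ + ENNReal.ofReal (ε n) < 1 := by
      have hCle : μ (C t) ≤ 1 := prob_le_one
      have h1 : ENNReal.ofReal (ε n) < μ (C t) :=
        (ENNReal.ofReal_lt_iff_lt_toReal (hεpos n).le (measure_ne_top μ _)).mpr hεn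
      calc μ (C t)ᶜ + ENNReal.ofReal (ε n)
          < μ (C t)ᶜ + μ (C t) :=
            ENNReal.add_lt_add_left (measure_ne_top μ _) h1
        _ = 1 := by
            rw [measure_compl (hCm t) (measure_ne_top μ _), measure_univ,
              tsub_add_cancel_of_le hCle]
    have : μ (A n) < μ (A n) := by
      calc μ (A n) ≤ (μ (C t)ᶜ + ENNReal.ofReal (ε n)) * μ (A n) := by
            rw [add_mul]; exact hkey
        _ < 1 * μ (A n) := by
            rw [mul_comm _ (μ (A n)), mul_comm 1]; exact ENNReal.mul_lt_mul_right hAn hAnt hclt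
        _ = μ (A n) := one_mul _
    exact absurd this (lt_irrefl _)
  have hlimsup : limsup (fun n => μ (A n)) atTop ≤ 0 :=
    limsup_le_of_le (by isBoundedDefault) (hzero.mono fun n hn => hn.le)
  exact absurd (hpos.trans_le hlimsup) (lt_irrefl _)
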